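/- The Laguerre polynomials satisfy the generating function identity (1-t)^{-α-1} exp(tz/(t-1)) = ∑_{n=0}^∞ t^n L_n^α(z) for |t| < 1, z ∈ ℂ, α ∈ ℂ. -/

import Mathlib

open Finset Filter Topology MeasureTheory

private lemma asc_eval_nonneg (j : ℕ) {x : ℝ} (hx : 0 ≤ x) :
    0 ≤ (ascPochhammer ℝ j).eval x := by
  induction j with
  | zero => simp
  | succ j ih =>
    rw [ascPochhammer_succ_eval]
    exact mul_nonneg ih (by positivity)

private lemma asc_eval_norm_le (j : ℕ) {x : ℂ} {y : ℝ} (h : ‖x‖ ≤ y) :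
    ‖(ascPochhammer ℂ j).eval x‖ ≤ (ascPochhammer ℝ j).eval y := by
  have hy : 0 ≤ y := le_trans (norm_nonneg x) h
  induction j with
  | zero => simp
  | succ j ih =>
    rw [ascPochhammer_succ_eval, ascPochhammer_succ_eval]
    have h1 : ‖x + (j : ℂ)‖ ≤ y + j := by
      calc ‖x + (j : ℂ)‖ ≤ ‖x‖ + ‖(j : ℂ)‖ := norm_add_le _ _
        _ ≤ y + j := by rw [Complex.norm_natCast]; linarith
    calc ‖(ascPochhammer ℂ j).eval x * (x + j)‖
        = ‖(ascPochhammer ℂ j).eval x‖ * ‖x + (j : ℂ)‖ := norm_mul _ _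
      _ ≤ (ascPochhammer ℝ j).eval y * (y + j) := by
          apply mul_le_mul ih h1 (norm_nonneg _) (asc_eval_nonneg j hy)

private lemma asc_eval_ofReal (j : ℕ) (x : ℝ) :
    (((ascPochhammer ℝ j).eval x : ℝ) : ℂ) = (ascPochhammer ℂ j).eval (x : ℂ) := by
  rw [← ascPochhammer_map (algebraMap ℝ ℂ) j, Polynomial.eval_map]
  exact (Polynomial.eval₂_at_apply (algebraMap ℝ ℂ) x).symm

/-- The binomial series: `(1 - t) ^ b = ∑ (-b)_n t^n / n!` for `‖t‖ < 1`. -/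
private lemma hasSum_one_sub_cpow (b : ℂ) {t : ℂ} (ht : ‖t‖ < 1) :
    HasSum (fun n : ℕ => (ascPochhammer ℂ n).eval (-b) * t ^ n / n.factorial)
      ((1 - t) ^ b) := by
  set F : ℂ → ℂ := fun u => (1 - u) ^ b with hF
  have hS : IsOpen {w : ℂ | 0 < (1 - w).re} :=
    isOpen_lt continuous_const (Complex.continuous_re.comp (continuous_const.sub continuous_id))
  have hmem : ∀ w : ℂ, ‖w‖ < 1 → 0 < (1 - w).re := by
    intro w hw
    simp only [Complex.sub_re, Complex.one_re]
    have h1 : |w.re| ≤ ‖w‖ := Complex.abs_re_le_norm w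
    have h2 : w.re ≤ |w.re| := le_abs_self _
    linarith
  have hderiv : ∀ n : ℕ, ∀ w : ℂ, 0 < (1 - w).re →
      iteratedDeriv n F w = (ascPochhammer ℂ n).eval (-b) * (1 - w) ^ (b - n) := by
    intro n
    induction n with
    | zero => intro w hw; simp [F]
    | succ n ih =>
      intro w hw
      rw [iteratedDeriv_succ]
      have heq : iteratedDeriv n F =ᶠ[nhds w]
          fun u => (ascPochhammer ℂ n).eval (-b) * (1 - u) ^ (b - n) :=
        Filter.eventually_of_mem (hS.mem_nhds hw) (fun u hu => ih u hu)
      rw [heq.deriv_eq]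
      have hd : HasDerivAt (fun u : ℂ => (1 - u) ^ (b - n))
          ((b - n) * (1 - w) ^ (b - n - 1) * (-1)) w :=
        HasDerivAt.cpow_const ((hasDerivAt_id w).const_sub 1)
          (Complex.mem_slitPlane_iff.mpr (Or.inl hw))
      rw [deriv_const_mul _ hd.differentiableAt, hd.deriv, ascPochhammer_succ_eval]
      push_cast
      rw [show b - ((n : ℂ) + 1) = b - n - 1 by ring]
      ring
  have hdiff : DifferentiableOn ℂ F (Metric.ball 0 1) := by
    intro w hw
    have hw' : 0 < (1 - w).re := hmem w (by simpa using mem_ball_zero_iff.mp hw)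
    exact (((differentiableAt_const (1 : ℂ)).sub differentiableAt_id).cpow
      (differentiableAt_const b) (Complex.mem_slitPlane_iff.mpr (Or.inl hw'))).differentiableWithinAt
  have H := Complex.hasSum_taylorSeries_on_ball hdiff (mem_ball_zero_iff.mpr ht)
  have hterm : (fun n : ℕ => (ascPochhammer ℂ n).eval (-b) * t ^ n / n.factorial) =
      fun n : ℕ => (n.factorial : ℂ)⁻¹ • (t - 0) ^ n • iteratedDeriv n F 0 := by
    funext n
    rw [hderiv n 0 (by norm_num), sub_zero, show ((1:ℂ) - 0) = 1 by norm_num,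
      Complex.one_cpow, mul_one, smul_eq_mul, smul_eq_mul]
    field_simp
  rw [hterm]
  exact H

/-- Real version of the binomial series. -/
private lemma hasSum_one_sub_rpow (x : ℝ) {r : ℝ} (h0 : 0 ≤ r) (h1 : r < 1) :
    HasSum (fun j : ℕ => (ascPochhammer ℝ j).eval x * r ^ j / j.factorial)
      ((1 - r) ^ (-x)) := by
  have hnr : ‖(r : ℂ)‖ < 1 := by rwa [Complex.norm_real, Real.norm_eq_abs, abs_of_nonneg h0]
  have key := hasSum_one_sub_cpow (-(x : ℂ)) hnr
  rw [neg_neg] at key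
  refine Complex.hasSum_ofReal.mp ?_
  have hval : (((1 - r) ^ (-x) : ℝ) : ℂ) = (1 - (r : ℂ)) ^ (-(x : ℂ)) := by
    rw [Complex.ofReal_cpow (by linarith) (-x)]
    push_cast
    ring_nf
  rw [hval]
  have hterm : (fun j : ℕ => (((ascPochhammer ℝ j).eval x * r ^ j / j.factorial : ℝ) : ℂ)) =
      fun j : ℕ => (ascPochhammer ℂ j).eval (x : ℂ) * (r : ℂ) ^ j / (j.factorial : ℂ) := by
    funext j
    push_cast [asc_eval_ofReal]
    ring
  rw [hterm]
  exact key

/-- The generalized Laguerre polynomial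
`L_n^α(z) = (-1)^n ∑_{k=0}^n (-α-n)_{n-k} z^k / (k! (n-k)!)`. -/
noncomputable def laguerre (n : ℕ) (α : ℂ) (z : ℂ) : ℂ :=
  (-1) ^ n * ∑ k ∈ Finset.range (n + 1),
    (ascPochhammer ℂ (n - k)).eval (-α - (n : ℂ)) * z ^ k
      / ((k.factorial : ℂ) * ((n - k).factorial : ℂ))

theorem laguerre_generating_function (t : ℂ) (ht : ‖t‖ < 1) (z α : ℂ) :
    HasSum (fun n : ℕ => t ^ n * laguerre n α z)
      ((1 - t) ^ (-α - 1) * Complex.exp (t * z / (t - 1))) := by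
  have h1t : (1 : ℂ) - t ≠ 0 := by
    intro h
    rw [sub_eq_zero] at h
    rw [← h] at ht
    simp at ht
  have hr1 : (1 : ℝ) - ‖t‖ > 0 := by linarith
  set f : ℕ × ℕ → ℂ := fun p =>
    (-1) ^ p.1 * z ^ p.1 * t ^ (p.1 + p.2) * (ascPochhammer ℂ p.2).eval (α + 1 + p.1)
      / (p.1.factorial * p.2.factorial) with hf
  -- row sums
  have hrow : ∀ k : ℕ, HasSum (fun j => f (k, j))
      ((-1) ^ k * z ^ k * t ^ k / k.factorial * (1 - t) ^ (-α - 1 - k)) := by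
    intro k
    have h := (hasSum_one_sub_cpow (-α - 1 - k) ht).mul_left
      ((-1) ^ k * z ^ k * t ^ k / k.factorial)
    have harg : -(-α - 1 - (k : ℂ)) = α + 1 + k := by ring
    rw [harg] at h
    have hterm : (fun j : ℕ => f (k, j)) = fun j : ℕ =>
        ((-1) ^ k * z ^ k * t ^ k / k.factorial) *
          ((ascPochhammer ℂ j).eval (α + 1 + k) * t ^ j / j.factorial) := by
      funext j
      simp only [hf, pow_add]
      field_simp
    rw [hterm]
    exact h
  -- column (outer) sum
  have hc : HasSum (fun k : ℕ => (-1) ^ k * z ^ k * t ^ k / k.factorial * (1 - t) ^ (-α - 1 - k))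
      ((1 - t) ^ (-α - 1) * Complex.exp (t * z / (t - 1))) := by
    have hexp : HasSum (fun k : ℕ => (t * z / (t - 1)) ^ k / k.factorial)
        (Complex.exp (t * z / (t - 1))) := by
      rw [Complex.exp_eq_exp_ℂ]
      exact NormedSpace.expSeries_div_hasSum_exp _
    have h := hexp.mul_left ((1 - t) ^ (-α - 1))
    have hterm : (fun k : ℕ =>
        (-1) ^ k * z ^ k * t ^ k / k.factorial * (1 - t) ^ (-α - 1 - k)) =
        fun k : ℕ => (1 - t) ^ (-α - 1) * ((t * z / (t - 1)) ^ k / k.factorial) := by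
      funext k
      have ht1 : t - 1 ≠ 0 := by
        intro h'
        rw [sub_eq_zero] at h'
        rw [h'] at ht
        simp at ht
      rw [show (-α - 1 - (k : ℂ)) = (-α - 1) + (-(k : ℂ)) by ring,
        Complex.cpow_add _ _ h1t, Complex.cpow_neg, Complex.cpow_natCast]
      rw [div_pow, mul_pow, show (t - 1) ^ k = (-1) ^ k * (1 - t) ^ k by
        rw [show t - 1 = -(1 - t) by ring, neg_pow]]
      have h2 : ((1 : ℂ) - t) ^ k ≠ 0 := pow_ne_zero _ h1t
      have h3 : ((-1 : ℂ)) ^ k ≠ 0 := pow_ne_zero _ (by norm_num)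
      have h4 : (k.factorial : ℂ) ≠ 0 := Nat.cast_ne_zero.mpr k.factorial_ne_zero
      field_simp
      have hneg : ((-1 : ℂ)) ^ k * (-1) ^ k = 1 := by
        rw [← pow_add, ← two_mul, pow_mul]
        norm_num
      linear_combination (z ^ k * t ^ k * (1 - t) ^ (-α - 1)) * hneg
    rw [hterm]
    exact h
  -- summability via nonnegative majorant
  set g : ℕ × ℕ → ℝ := fun p =>
    ‖z‖ ^ p.1 * ‖t‖ ^ (p.1 + p.2) * (ascPochhammer ℝ p.2).eval (‖α‖ + 1 + p.1)
      / (p.1.factorial * p.2.factorial) with hg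
  have hg_nonneg : ∀ p : ℕ × ℕ, 0 ≤ g p := by
    intro p
    have := asc_eval_nonneg p.2 (x := ‖α‖ + 1 + p.1) (by positivity)
    positivity
  have hfg : ∀ p : ℕ × ℕ, ‖f p‖ ≤ g p := by
    intro ⟨k, j⟩
    simp only [hf, hg]
    simp only [norm_div, norm_mul, norm_pow, norm_neg, norm_one, one_pow, one_mul,
      Complex.norm_natCast]
    have hle : ‖α + 1 + (k : ℂ)‖ ≤ ‖α‖ + 1 + k := by
      calc ‖α + 1 + (k : ℂ)‖ ≤ ‖α + 1‖ + ‖(k : ℂ)‖ := norm_add_le _ _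
        _ ≤ (‖α‖ + ‖(1 : ℂ)‖) + k := by
            rw [Complex.norm_natCast]
            exact add_le_add_left (norm_add_le _ _) _
        _ = ‖α‖ + 1 + k := by rw [norm_one]
    have hnn := asc_eval_nonneg j (x := ‖α‖ + 1 + (k : ℝ)) (by positivity)
    refine div_le_div₀ (mul_nonneg (by positivity) hnn) ?_ (by positivity) le_rfl
    exact mul_le_mul_of_nonneg_left (asc_eval_norm_le j hle) (by positivity)
  have hrow_g : ∀ k : ℕ, HasSum (fun j => g (k, j))
      (‖z‖ ^ k * ‖t‖ ^ k / k.factorial * (1 - ‖t‖) ^ (-(‖α‖ + 1 + k))) := by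
    intro k
    have h := (hasSum_one_sub_rpow (‖α‖ + 1 + k) (norm_nonneg t) ht).mul_left
      (‖z‖ ^ k * ‖t‖ ^ k / k.factorial)
    have hterm : (fun j : ℕ => g (k, j)) = fun j : ℕ =>
        (‖z‖ ^ k * ‖t‖ ^ k / k.factorial) *
          ((ascPochhammer ℝ j).eval (‖α‖ + 1 + k) * ‖t‖ ^ j / j.factorial) := by
      funext j
      simp only [hg, pow_add]
      field_simp
    rw [hterm]
    exact h
  have hg_summable : Summable g := by
    rw [summable_prod_of_nonneg hg_nonneg]
    constructor
    · exact fun k => (hrow_g k).summable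
    · have : (fun k : ℕ => ∑' j, g (k, j)) =
          fun k : ℕ => (1 - ‖t‖) ^ (-(‖α‖ + 1)) * ((‖z‖ * ‖t‖ / (1 - ‖t‖)) ^ k / k.factorial) := by
        funext k
        rw [(hrow_g k).tsum_eq]
        rw [show -(‖α‖ + 1 + (k : ℝ)) = (-(‖α‖ + 1)) + (-(k : ℝ)) by ring,
          Real.rpow_add hr1,
          show (1 - ‖t‖) ^ (-(k : ℝ)) = (((1 - ‖t‖) : ℝ) ^ k)⁻¹ by
            rw [Real.rpow_neg (le_of_lt hr1), Real.rpow_natCast]]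
        rw [div_pow, mul_pow]
        have h2 : ((1 : ℝ) - ‖t‖) ^ k ≠ 0 := pow_ne_zero _ (ne_of_gt hr1)
        have h4 : (k.factorial : ℝ) ≠ 0 := Nat.cast_ne_zero.mpr k.factorial_ne_zero
        field_simp
      rw [this]
      exact (Real.summable_pow_div_factorial _).mul_left _
  have hf_summable : Summable f :=
    Summable.of_norm (Summable.of_nonneg_of_le (fun p => norm_nonneg _) hfg hg_summable)
  -- the double series has the right sum
  have hfs : HasSum f ((1 - t) ^ (-α - 1) * Complex.exp (t * z / (t - 1))) := by
    have h1 := hf_summable.hasSum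
    have h2 := h1.prod_fiberwise hrow
    rwa [h2.unique hc] at h1
  -- regroup along antidiagonals
  have hsig : HasSum (fun n : ℕ => ∑ p ∈ Finset.HasAntidiagonal.antidiagonal n, f p)
      ((1 - t) ^ (-α - 1) * Complex.exp (t * z / (t - 1))) := by
    have he := (Finset.HasAntidiagonal.sigmaAntidiagonalEquivProd (A := ℕ)).hasSum_iff.mpr hfs
    exact he.sigma (fun n => (Finset.HasAntidiagonal.antidiagonal n).hasSum f)
  -- identify the antidiagonal sums with the Laguerre polynomials
  have hfinal : (fun n : ℕ => t ^ n * laguerre n α z) =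
      fun n : ℕ => ∑ p ∈ Finset.HasAntidiagonal.antidiagonal n, f p := by
    funext n
    rw [Finset.Nat.sum_antidiagonal_eq_sum_range_succ_mk]
    simp only [laguerre, Finset.mul_sum]
    refine Finset.sum_congr rfl fun k hk => ?_
    have hkn : k ≤ n := Nat.lt_succ_iff.mp (Finset.mem_range.mp hk)
    have e1 : (ascPochhammer ℂ (n - k)).eval (-α - n) =
        (-1) ^ (n - k) * (ascPochhammer ℂ (n - k)).eval (α + 1 + k) := by
      rw [show (-α - (n : ℂ)) = -(α + n) by ring, ascPochhammer_eval_neg_eq_descPochhammer,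
        descPochhammer_eval_eq_ascPochhammer]
      congr 2
      push_cast [Nat.cast_sub hkn]
      ring
    have hsign : ((-1 : ℂ)) ^ n = (-1) ^ k * (-1) ^ (n - k) := by
      rw [← pow_add, Nat.add_sub_cancel' hkn]
    have h2 : ((-1 : ℂ)) ^ (n - k) * (-1) ^ (n - k) = 1 := by
      rw [← pow_add, ← two_mul, pow_mul]
      norm_num
    simp only [hf]
    rw [Nat.add_sub_cancel' hkn, e1, hsign]
    have h4 : (k.factorial : ℂ) ≠ 0 := Nat.cast_ne_zero.mpr k.factorial_ne_zero
    have h5 : ((n - k).factorial : ℂ) ≠ 0 := Nat.cast_ne_zero.mpr (n - k).factorial_ne_zero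
    field_simp
    linear_combination (t ^ n * z ^ k *
      (ascPochhammer ℂ (n - k)).eval (α + 1 + k)) * h2
  rw [hfinal]
  exact hsig
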